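/- Let s ≥ r ≥ 2 be positive integers and let A be a pattern with r color classes on the edges of the complete bipartite graph K_{m',n'}. Then for all positive integers m, n, F(m,n; s, A) ≤ ((s−r+1)/s)·mn; that is, for every edge-coloring c of K_{m,n} with colors from [s], there is an edge-coloring c' of K_{m,n} with colors from [s] that contains no occurrence of the pattern A and differs from c on at most ((s−r+1)/s)·mn edges. -/

import Mathlib

open Finset

/-- A coloring `c` of the edges of `K_{m,n}` contains an occurrence of the pattern `P`
(a surjective labeling of the edges of `K_{m',n'}` by `r` classes): there exist injections
`φ`, `ψ` of the two sides such that colors agree exactly on positions in the same class. -/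
def ContainsPattern {m n m' n' r s : ℕ} (c : Fin m → Fin n → Fin s)
    (P : Fin m' × Fin n' → Fin r) : Prop :=
  ∃ φ : Fin m' ↪ Fin m, ∃ ψ : Fin n' ↪ Fin n,
    ∀ i i' : Fin m', ∀ j j' : Fin n',
      (c (φ i) (ψ j) = c (φ i') (ψ j') ↔ P (i, j) = P (i', j'))

/-- The number of edges of `K_{m,n}` on which the colorings `c` and `c'` differ. -/
def ColDist {m n s : ℕ} (c c' : Fin m → Fin n → Fin s) : ℕ :=
  (univ.filter fun p : Fin m × Fin n => c p.1 p.2 ≠ c' p.1 p.2).card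

lemma avg_subset (s : ℕ) (N : Fin s → ℕ) :
    ∀ k, k ≤ s → ∃ T : Finset (Fin s), T.card = k ∧
      s * ∑ a ∈ T, N a ≤ k * ∑ a, N a := by
  intro k
  induction k with
  | zero => intro _; exact ⟨∅, by simp⟩
  | succ k ih =>
    intro hk
    obtain ⟨T, hTc, hTs⟩ := ih (Nat.le_of_succ_le hk)
    have hcompl : (Tᶜ).card = s - k := by
      rw [Finset.card_compl, hTc, Fintype.card_fin]
    have hne : Tᶜ.Nonempty := by
      rw [← Finset.card_pos, hcompl]; omega
    obtain ⟨a, haT, hamin⟩ := Finset.exists_min_image Tᶜ N hne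
    have haT' : a ∉ T := Finset.mem_compl.mp haT
    have hsum : ∑ b ∈ Tᶜ, N b + ∑ b ∈ T, N b = ∑ b, N b :=
      Finset.sum_compl_add_sum T N
    have hmin : (s - k) * N a ≤ ∑ b ∈ Tᶜ, N b := by
      calc (s - k) * N a = ∑ _b ∈ Tᶜ, N a := by
            rw [Finset.sum_const, hcompl, smul_eq_mul]
        _ ≤ ∑ b ∈ Tᶜ, N b := Finset.sum_le_sum fun b hb => hamin b hb
    refine ⟨insert a T, ?_, ?_⟩
    · rw [Finset.card_insert_of_notMem haT', hTc]
    · rw [Finset.sum_insert haT']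
      obtain ⟨d, hd, hd1⟩ : ∃ d, s = k + d ∧ 1 ≤ d := ⟨s - k, by omega, by omega⟩
      set S := ∑ b ∈ T, N b
      set C := ∑ b ∈ Tᶜ, N b
      set Tot := ∑ b, N b
      rw [hd] at hmin hTs ⊢
      simp only [Nat.add_sub_cancel_left] at hmin
      nlinarith [hmin, hTs, hsum, Nat.mul_le_mul_left d hTs]

/-- **Upper bound, graph form.**  Let `s ≥ r ≥ 2` and let `P` be a pattern with `r` nonempty
color classes on the edges of `K_{m',n'}`.  Then `F(m,n; s, P) ≤ ((s-r+1)/s) mn`: every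
edge-coloring `c` of `K_{m,n}` with colors from `[s]` can be recolored on at most
`((s-r+1)/s) mn` edges so that the result contains no occurrence of `P`. -/
theorem coloring_editing_upper_bound
    (s r m' n' : ℕ) (hr : 2 ≤ r) (hrs : r ≤ s)
    (P : Fin m' × Fin n' → Fin r) (hP : Function.Surjective P)
    (m n : ℕ) (hm : 0 < m) (hn : 0 < n) :
    ∀ c : Fin m → Fin n → Fin s, ∃ c' : Fin m → Fin n → Fin s,
      ¬ ContainsPattern c' P ∧
      (ColDist c c' : ℝ) ≤ (((s : ℝ) - r + 1) / s) * m * n := by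

  intro c
  classical
  -- counts of each color
  set N : Fin s → ℕ := fun a =>
    (univ.filter fun p : Fin m × Fin n => c p.1 p.2 = a).card with hN
  have htot : ∑ a, N a = m * n := by
    rw [hN]
    rw [← Finset.card_eq_sum_card_fiberwise (f := fun p : Fin m × Fin n => c p.1 p.2)
      (s := univ) (t := univ) (fun x _ => Finset.mem_univ _)]
    simp [Finset.card_univ]
  obtain ⟨T, hTcard, hTsum⟩ := avg_subset s N (s - r + 1) (by omega)
  have hcompl : (Tᶜ).card = r - 1 := by
    rw [Finset.card_compl, hTcard, Fintype.card_fin]; omega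
  have hTne : Tᶜ.Nonempty := by rw [← Finset.card_pos, hcompl]; omega
  obtain ⟨t0, ht0⟩ := hTne
  set c' : Fin m → Fin n → Fin s := fun i j => if c i j ∈ T then t0 else c i j with hc'
  have hrange : ∀ i j, c' i j ∈ Tᶜ := by
    intro i j
    rw [hc']
    by_cases h : c i j ∈ T
    · simpa [h] using ht0
    · simpa [h] using h
  refine ⟨c', ?_, ?_⟩
  · rintro ⟨φ, ψ, h⟩
    -- pick a representative edge for each class
    have f_def : ∀ t : Fin r, ∃ e : Fin m' × Fin n', P e = t := hP
    choose e he using f_def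
    set f : Fin r → Fin s := fun t => c' (φ (e t).1) (ψ (e t).2) with hf
    have hinj : Function.Injective f := by
      intro t t' htt
      have := (h (e t).1 (e t').1 (e t).2 (e t').2).mp htt
      rw [Prod.mk.eta, Prod.mk.eta, he, he] at this
      exact this
    have hsub : (univ.image f) ⊆ Tᶜ := by
      intro x hx
      obtain ⟨t, _, rfl⟩ := Finset.mem_image.mp hx
      exact hrange _ _
    have : r ≤ r - 1 := by
      calc r = (univ.image f).card := by
            rw [Finset.card_image_of_injective _ hinj, Finset.card_univ, Fintype.card_fin]
        _ ≤ (Tᶜ).card := Finset.card_le_card hsub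
        _ = r - 1 := hcompl
    omega
  · -- distance computation
    have hdist : ColDist c c' = ∑ a ∈ T, N a := by
      have hset : (univ.filter fun p : Fin m × Fin n => c p.1 p.2 ≠ c' p.1 p.2)
          = (univ.filter fun p : Fin m × Fin n => c p.1 p.2 ∈ T) := by
        apply Finset.filter_congr
        intro p _
        simp only [hc']
        by_cases h : c p.1 p.2 ∈ T
        · simp only [h, if_pos, iff_true]
          intro heq
          rw [heq] at h
          exact (Finset.mem_compl.mp ht0) h
        · simp [h]
      rw [ColDist, hset]
      rw [Finset.card_eq_sum_card_fiberwise (f := fun p : Fin m × Fin n => c p.1 p.2)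
        (s := univ.filter fun p : Fin m × Fin n => c p.1 p.2 ∈ T)
        (t := T) (fun x hx => (Finset.mem_filter.mp (Finset.mem_coe.mp hx)).2)]
      apply Finset.sum_congr rfl
      intro a ha
      rw [hN]
      congr 1
      ext p
      simp only [Finset.mem_filter, Finset.mem_univ, true_and]
      constructor
      · rintro ⟨_, h2⟩; exact h2
      · intro h2; exact ⟨h2 ▸ ha, h2⟩
    -- numeric finish
    have hkey : s * ColDist c c' ≤ (s - r + 1) * (m * n) := by
      rw [hdist, ← htot]; exact hTsum
    have hs0 : (0:ℝ) < s := by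
      have : 0 < s := by omega
      exact_mod_cast this
    have hkeyR : (s:ℝ) * ColDist c c' ≤ ((s:ℝ) - r + 1) * (m * n) := by
      have := (Nat.cast_le (α := ℝ)).mpr hkey
      push_cast [Nat.cast_sub hrs] at this
      linarith
    rw [div_mul_eq_mul_div, div_mul_eq_mul_div, le_div_iff₀ hs0]
    nlinarith [hkeyR]
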